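/- For any partition λ, the moment generating series of the transition measure satisfies ∑_{i=1}^{ℓ(λ)+1} c_i(λ)/(z - λ_i + i - 1) = (1/z)·C_λ(-z)²/(C_λ(-z-1)·C_λ(-z+1)), as an identity of rational functions in z, where C_λ(z) = ∏_{(i,j)∈λ}(z + j - i) is the content polynomial and c_i(λ) = H_λ/H_{λ^{(i)}}. -/

import Mathlib

open Finset

/-- Conjugate part `λ'_j` (number of rows of length `≥ j`), rows indexed in `range L`. -/
def conjPart (L : ℕ) (lam : ℕ → ℕ) (j : ℕ) : ℕ :=
  ((Finset.range L).filter (fun i => j ≤ lam i)).card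

/-- Product of hook lengths `H_λ` (rows 0-indexed), as a rational number. -/
def hookProd (L : ℕ) (lam : ℕ → ℕ) : ℚ :=
  ∏ i ∈ Finset.range L, ∏ j ∈ Finset.Icc 1 (lam i),
    ((lam i : ℚ) + (conjPart L lam j : ℚ) - (i : ℚ) - (j : ℚ))

open scoped Classical in
/-- Transition probability `cᵢ(λ) = H_λ / H_{λ^{(i)}}`, equal to `0` when adding a
box to row `i` does not produce a partition. -/
noncomputable def transProb (L : ℕ) (lam : ℕ → ℕ) (i : ℕ) : ℚ :=
  if Antitone (Function.update lam i (lam i + 1)) then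
    hookProd L lam / hookProd L (Function.update lam i (lam i + 1))
  else 0

/-- Content polynomial `C_λ(w) = ∏_{(i,j)∈λ}(w + j - i)` (rows 0-indexed:
the content of the cell in row `i`, column `j` is `j - (i+1)`). -/
def contentPoly (l : ℕ) (lam : ℕ → ℕ) (w : ℚ) : ℚ :=
  ∏ i ∈ Finset.range l, ∏ j ∈ Finset.Icc 1 (lam i),
    (w + (j : ℚ) - ((i : ℚ) + 1))

lemma Fstep (c : ℚ) (s : ℕ) :
    (∏ j ∈ Finset.range s, (c + 1 - (j:ℚ))) * (c + 1 - (s:ℚ)) =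
      (c + 1) * ∏ j ∈ Finset.range s, (c - (j:ℚ)) := by
  induction s with
  | zero => simp
  | succ n ih =>
      rw [Finset.prod_range_succ, Finset.prod_range_succ]
      push_cast
      linear_combination (c - (n:ℚ)) * ih

lemma dbase (lam : ℕ → ℕ) (i j : ℕ) (hj : j ≤ lam i) :
    ((Finset.Icc i i).filter (fun k => j ≤ lam k)).card = 1 := by
  rw [Finset.Icc_self, Finset.filter_singleton, if_pos hj, Finset.card_singleton]

lemma dconst (lam : ℕ → ℕ) (hanti : Antitone lam) (i t j : ℕ) (hj : j ≤ lam t) :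
    ((Finset.Icc i t).filter (fun k => j ≤ lam k)).card = t + 1 - i := by
  rw [Finset.filter_true_of_mem, Nat.card_Icc]
  intro k hk
  exact hj.trans (hanti (Finset.mem_Icc.mp hk).2)

lemma dstep (lam : ℕ → ℕ) (i t j : ℕ) (hit : i ≤ t) (hj : lam (t+1) < j) :
    ((Finset.Icc i (t+1)).filter (fun k => j ≤ lam k)).card
      = ((Finset.Icc i t).filter (fun k => j ≤ lam k)).card := by
  congr 1
  rw [← Finset.insert_Icc_right_eq_Icc_add_one (by omega : i ≤ t + 1), Finset.filter_insert,
    if_neg (by omega)]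

lemma h01 (m : ℕ) : Finset.Icc 1 m = Finset.Ioc 0 m := by
  ext x; simp [Finset.mem_Icc, Finset.mem_Ioc]; omega

lemma prodIcc1 (m : ℕ) (f : ℕ → ℚ) :
    (∏ j ∈ Finset.Icc 1 m, f j) = ∏ j ∈ Finset.range m, f (1 + j) := by
  rw [← Finset.Ico_add_one_right_eq_Icc, Finset.prod_Ico_eq_prod_range]
  rfl

lemma Mlem (lam : ℕ → ℕ) (hanti : Antitone lam) (i : ℕ) :
    ∀ t, i ≤ t →
    ((lam i : ℚ) + (t:ℚ) - (i:ℚ) + 1) *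
      (∏ j ∈ Finset.Icc 1 (lam i),
        ((lam i : ℚ) - (j:ℚ) + (((Finset.Icc i t).filter (fun k => j ≤ lam k)).card : ℚ))) *
      (∏ k ∈ Finset.Icc (i+1) t, ((lam i:ℚ) - (i:ℚ) - ((lam k:ℚ) - (k:ℚ)))) =
    (∏ j ∈ Finset.Icc 1 (lam i),
        ((lam i : ℚ) - (j:ℚ) + (((Finset.Icc i t).filter (fun k => j ≤ lam k)).card : ℚ) + 1)) *
      (∏ k ∈ Finset.Icc (i+1) t, ((lam i:ℚ) - (i:ℚ) - ((lam k:ℚ) - (k:ℚ)) + 1)) := by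
  intro t ht
  induction t, ht using Nat.le_induction with
  | base =>
      have e0 : Finset.Icc (i+1) i = (∅ : Finset ℕ) := Finset.Icc_eq_empty (by omega)
      have h1 : ∀ j ∈ Finset.Icc 1 (lam i),
          (lam i : ℚ) - (j:ℚ) + (((Finset.Icc i i).filter (fun k => j ≤ lam k)).card : ℚ)
            = (lam i : ℚ) - (j:ℚ) + 1 := by
        intro j hj
        rw [dbase lam i j (Finset.mem_Icc.mp hj).2, Nat.cast_one]
      have h2 : ∀ j ∈ Finset.Icc 1 (lam i),
          (lam i : ℚ) - (j:ℚ) + (((Finset.Icc i i).filter (fun k => j ≤ lam k)).card : ℚ) + 1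
            = (lam i : ℚ) - (j:ℚ) + 1 + 1 := by
        intro j hj
        rw [dbase lam i j (Finset.mem_Icc.mp hj).2, Nat.cast_one]
      rw [e0, Finset.prod_empty, Finset.prod_empty, mul_one, mul_one, Finset.prod_congr rfl h1,
        Finset.prod_congr rfl h2, prodIcc1, prodIcc1]
      have h3 : ∀ j ∈ Finset.range (lam i),
          ((lam i:ℚ) - ((1+j:ℕ):ℚ) + 1) = ((lam i:ℚ) - (j:ℚ)) := by
        intro j _; push_cast; ring
      have h4 : ∀ j ∈ Finset.range (lam i),
          ((lam i:ℚ) - ((1+j:ℕ):ℚ) + 1 + 1) = ((lam i:ℚ) + 1 - (j:ℚ)) := by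
        intro j _; push_cast; ring
      rw [Finset.prod_congr rfl h3, Finset.prod_congr rfl h4]
      linear_combination (-1 : ℚ) * Fstep (lam i : ℚ) (lam i)
  | succ t ht ih =>
      have hsl : lam (t + 1) ≤ lam i := hanti (by omega)
      have hsplit : ∀ f : ℕ → ℚ, (∏ j ∈ Finset.Icc 1 (lam i), f j)
          = (∏ j ∈ Finset.Icc 1 (lam (t+1)), f j) *
            ∏ j ∈ Finset.Ioc (lam (t+1)) (lam i), f j := by
        intro f
        rw [h01, h01]
        exact (Finset.prod_Ioc_consecutive f (Nat.zero_le _) hsl).symm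
      rw [hsplit, hsplit] at ih
      rw [hsplit, hsplit]
      -- upper segments in goal: reduce filter to Icc i t
      have gU : ∀ j ∈ Finset.Ioc (lam (t+1)) (lam i),
          (lam i:ℚ) - (j:ℚ) + (((Finset.Icc i (t+1)).filter (fun k => j ≤ lam k)).card : ℚ)
          = (lam i:ℚ) - (j:ℚ) + (((Finset.Icc i t).filter (fun k => j ≤ lam k)).card : ℚ) := by
        intro j hj
        rw [dstep lam i t j ht (Finset.mem_Ioc.mp hj).1]
      have gV : ∀ j ∈ Finset.Ioc (lam (t+1)) (lam i),
          (lam i:ℚ) - (j:ℚ) + (((Finset.Icc i (t+1)).filter (fun k => j ≤ lam k)).card : ℚ) + 1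
          = (lam i:ℚ) - (j:ℚ) + (((Finset.Icc i t).filter (fun k => j ≤ lam k)).card : ℚ) + 1 := by
        intro j hj
        rw [dstep lam i t j ht (Finset.mem_Ioc.mp hj).1]
      rw [Finset.prod_congr rfl gU, Finset.prod_congr rfl gV]
      -- lower segments to range form
      rw [prodIcc1, prodIcc1] at ih
      rw [prodIcc1, prodIcc1]
      -- convert lower factors, goal
      have g1 : ∀ j ∈ Finset.range (lam (t+1)),
          (lam i:ℚ) - ((1+j:ℕ):ℚ) +
            (((Finset.Icc i (t+1)).filter (fun k => 1+j ≤ lam k)).card : ℚ)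
          = (lam i:ℚ) + (t:ℚ) - (i:ℚ) + 1 - (j:ℚ) := by
        intro j hj
        rw [dconst lam hanti i (t+1) (1+j) (by have := Finset.mem_range.mp hj; omega),
          Nat.cast_sub (by omega)]
        push_cast; ring
      have g2 : ∀ j ∈ Finset.range (lam (t+1)),
          (lam i:ℚ) - ((1+j:ℕ):ℚ) +
            (((Finset.Icc i (t+1)).filter (fun k => 1+j ≤ lam k)).card : ℚ) + 1
          = (lam i:ℚ) + (t:ℚ) - (i:ℚ) + 1 + 1 - (j:ℚ) := by
        intro j hj
        rw [dconst lam hanti i (t+1) (1+j) (by have := Finset.mem_range.mp hj; omega),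
          Nat.cast_sub (by omega)]
        push_cast; ring
      rw [Finset.prod_congr rfl g1, Finset.prod_congr rfl g2]
      -- convert lower factors, ih
      have i1 : ∀ j ∈ Finset.range (lam (t+1)),
          (lam i:ℚ) - ((1+j:ℕ):ℚ) +
            (((Finset.Icc i t).filter (fun k => 1+j ≤ lam k)).card : ℚ)
          = (lam i:ℚ) + (t:ℚ) - (i:ℚ) - (j:ℚ) := by
        intro j hj
        rw [dconst lam hanti i t (1+j)
            (by have := Finset.mem_range.mp hj; have := hanti (by omega : t ≤ t + 1); omega),
          Nat.cast_sub (by omega)]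
        push_cast; ring
      have i2 : ∀ j ∈ Finset.range (lam (t+1)),
          (lam i:ℚ) - ((1+j:ℕ):ℚ) +
            (((Finset.Icc i t).filter (fun k => 1+j ≤ lam k)).card : ℚ) + 1
          = (lam i:ℚ) + (t:ℚ) - (i:ℚ) + 1 - (j:ℚ) := by
        intro j hj
        rw [dconst lam hanti i t (1+j)
            (by have := Finset.mem_range.mp hj; have := hanti (by omega : t ≤ t + 1); omega),
          Nat.cast_sub (by omega)]
        push_cast; ring
      rw [Finset.prod_congr rfl i1, Finset.prod_congr rfl i2] at ih
      -- split k-products at top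
      rw [Finset.prod_Icc_succ_top (by omega : i+1 ≤ t+1),
        Finset.prod_Icc_succ_top (by omega : i+1 ≤ t+1)]
      linear_combination (norm := (push_cast; ring1))
        (((lam i:ℚ) + (t:ℚ) - (i:ℚ) + 2) *
          (∏ j ∈ Finset.Ioc (lam (t+1)) (lam i),
            ((lam i:ℚ) - (j:ℚ) + (((Finset.Icc i t).filter (fun k => j ≤ lam k)).card : ℚ))) *
          (∏ k ∈ Finset.Icc (i+1) t, ((lam i:ℚ) - (i:ℚ) - ((lam k:ℚ) - (k:ℚ))))) *
            Fstep ((lam i:ℚ) + (t:ℚ) - (i:ℚ)) (lam (t+1))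
        + ((lam i:ℚ) + (t:ℚ) - (i:ℚ) + 2) * ih
        - ((∏ j ∈ Finset.Ioc (lam (t+1)) (lam i),
            ((lam i:ℚ) - (j:ℚ) + (((Finset.Icc i t).filter (fun k => j ≤ lam k)).card : ℚ) + 1)) *
          (∏ k ∈ Finset.Icc (i+1) t, ((lam i:ℚ) - (i:ℚ) - ((lam k:ℚ) - (k:ℚ)) + 1))) *
            Fstep ((lam i:ℚ) + (t:ℚ) - (i:ℚ) + 1) (lam (t+1))

lemma conj_split (l : ℕ) (lam : ℕ → ℕ) (hanti : Antitone lam) (i : ℕ) (hi : i ≤ l) (j : ℕ)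
    (hj : j ≤ lam i) :
    conjPart (l+1) lam j = i + ((Finset.Icc i l).filter (fun k => j ≤ lam k)).card := by
  unfold conjPart
  have hsp : Finset.range (l+1) = Finset.range i ∪ Finset.Icc i l := by
    ext x; simp only [Finset.mem_range, Finset.mem_Icc, Finset.mem_union]; omega
  rw [hsp, Finset.filter_union, Finset.card_union_of_disjoint, Finset.filter_true_of_mem,
    Finset.card_range]
  · intro k hk
    exact le_trans hj (hanti (le_of_lt (Finset.mem_range.mp hk)))
  · exact Finset.disjoint_filter_filter (Finset.disjoint_left.mpr
      (fun x hx hx' => by simp at hx hx'; omega))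

lemma updateAntitone (lam : ℕ → ℕ) (hanti : Antitone lam) (i : ℕ)
    (h : ∀ k, k < i → lam i + 1 ≤ lam k) :
    Antitone (Function.update lam i (lam i + 1)) := by
  intro x y hxy
  rw [Function.update_apply, Function.update_apply]
  split_ifs with hy hx hx
  · exact le_refl _
  · exact h x (by omega)
  · exact le_trans (hanti (hx ▸ hxy)) (Nat.le_succ _)
  · exact hanti hxy

lemma conj_update_ne (L : ℕ) (lam : ℕ → ℕ) (i j : ℕ) (hj : j ≠ lam i + 1) :
    conjPart L (Function.update lam i (lam i + 1)) j = conjPart L lam j := by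
  unfold conjPart
  congr 1
  apply Finset.filter_congr
  intro k _
  by_cases hk : k = i
  · subst hk
    rw [Function.update_self]
    constructor <;> intro <;> omega
  · rw [Function.update_of_ne hk]

lemma conj_at1 (L : ℕ) (lam : ℕ → ℕ) (hanti : Antitone lam) (i : ℕ) (hiL : i < L)
    (hup : ∀ k, k < i → lam i + 1 ≤ lam k) :
    conjPart L lam (lam i + 1) = i := by
  unfold conjPart
  rw [show (Finset.range L).filter (fun k => lam i + 1 ≤ lam k) = Finset.range i from ?_,
    Finset.card_range]
  ext x
  simp only [Finset.mem_filter, Finset.mem_range]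
  constructor
  · rintro ⟨hxL, hx⟩
    by_contra hc
    have := hanti (by omega : i ≤ x)
    omega
  · intro hx
    exact ⟨by omega, hup x hx⟩

lemma conj_at2 (L : ℕ) (lam : ℕ → ℕ) (hanti : Antitone lam) (i : ℕ) (hiL : i < L)
    (hup : ∀ k, k < i → lam i + 1 ≤ lam k) :
    conjPart L (Function.update lam i (lam i + 1)) (lam i + 1) = i + 1 := by
  unfold conjPart
  rw [show (Finset.range L).filter
      (fun k => lam i + 1 ≤ Function.update lam i (lam i + 1) k) = Finset.range (i+1) from ?_,
    Finset.card_range]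
  ext x
  simp only [Finset.mem_filter, Finset.mem_range]
  constructor
  · rintro ⟨hxL, hx⟩
    by_contra hc
    have hxi : x ≠ i := by omega
    rw [Function.update_of_ne hxi] at hx
    have := hanti (by omega : i ≤ x)
    omega
  · intro hx
    by_cases hx' : x = i
    · subst hx'
      exact ⟨by omega, by rw [Function.update_self]⟩
    · refine ⟨by omega, ?_⟩
      rw [Function.update_of_ne hx']
      exact hup x (by omega)

lemma splitR (l i : ℕ) (hi : i ≤ l) (f : ℕ → ℚ) :
    ∏ k ∈ Finset.range (l+1), f k
      = (∏ k ∈ Finset.range i, f k) * f i * ∏ k ∈ Finset.Icc (i+1) l, f k := by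
  have h1 : (∏ k ∈ Finset.Ico 0 i, f k) * ∏ k ∈ Finset.Ico i (l+1), f k
      = ∏ k ∈ Finset.Ico 0 (l+1), f k := Finset.prod_Ico_consecutive f (Nat.zero_le i) (by omega)
  have h2 : (∏ k ∈ Finset.Ico i (i+1), f k) * ∏ k ∈ Finset.Ico (i+1) (l+1), f k
      = ∏ k ∈ Finset.Ico i (l+1), f k := Finset.prod_Ico_consecutive f (by omega) (by omega)
  rw [Finset.range_eq_Ico, ← h1, ← h2, Nat.Ico_succ_singleton, Finset.prod_singleton,
    Finset.Ico_add_one_right_eq_Icc, mul_assoc, Finset.range_eq_Ico]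

lemma hookPos (L : ℕ) (lam : ℕ → ℕ) (hanti : Antitone lam) :
    0 < ∏ i ∈ Finset.range L, ∏ j ∈ Finset.Icc 1 (lam i),
      ((lam i : ℚ) + (conjPart L lam j : ℚ) - (i : ℚ) - (j : ℚ)) := by
  apply Finset.prod_pos
  intro i hi
  apply Finset.prod_pos
  intro j hj
  have hj' := Finset.mem_Icc.mp hj
  have hc : i + 1 ≤ conjPart L lam j := by
    unfold conjPart
    calc i + 1 = (Finset.range (i+1)).card := (Finset.card_range _).symm
    _ ≤ _ := by
        apply Finset.card_le_card
        intro k hk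
        have hk' := Finset.mem_range.mp hk
        simp only [Finset.mem_filter, Finset.mem_range]
        have := hanti (by omega : k ≤ i)
        exact ⟨by have := Finset.mem_range.mp hi; omega, by omega⟩
  have h1 : (j:ℚ) ≤ (lam i : ℚ) := by exact_mod_cast hj'.2
  have h2 : ((i:ℚ) + 1) ≤ (conjPart L lam j : ℚ) := by exact_mod_cast hc
  linarith

def rowP (L : ℕ) (lam : ℕ → ℕ) (k : ℕ) : ℚ :=
  ∏ j ∈ Finset.Icc 1 (lam k), ((lam k : ℚ) + (conjPart L lam j : ℚ) - (k : ℚ) - (j : ℚ))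

lemma hookProd_eq (L : ℕ) (lam : ℕ → ℕ) :
    hookProd L lam = ∏ k ∈ Finset.range L, rowP L lam k := rfl

lemma hookProd_pos (L : ℕ) (lam : ℕ → ℕ) (hanti : Antitone lam) : 0 < hookProd L lam :=
  hookPos L lam hanti

lemma transProb_eq (l : ℕ) (lam : ℕ → ℕ) (hanti : Antitone lam) (hsupp : ∀ k, l ≤ k → lam k = 0)
    (i : ℕ) (hi : i ≤ l) :
    transProb (l+1) lam i =
      (∏ j ∈ Finset.range l, ((lam i:ℚ) - (i:ℚ) - ((lam j:ℚ) - (j:ℚ)) + 1)) /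
      (∏ j ∈ (Finset.range (l+1)).erase i, ((lam i:ℚ) - (i:ℚ) - ((lam j:ℚ) - (j:ℚ)))) := by
  by_cases hA : Antitone (Function.update lam i (lam i + 1))
  case neg =>
    rw [transProb, if_neg hA]
    have hup : ¬ ∀ k, k < i → lam i + 1 ≤ lam k := fun h => hA (updateAntitone lam hanti i h)
    push_neg at hup
    obtain ⟨k, hk, hk2⟩ := hup
    have hk3 : lam i ≤ lam k := hanti (le_of_lt hk)
    have h1 : 1 ≤ i := by omega
    have hlam : lam (i-1) = lam i := by
      have h2 := hanti (by omega : k ≤ i - 1)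
      have h3 := hanti (by omega : i - 1 ≤ i)
      omega
    have hmem : i - 1 ∈ Finset.range l := Finset.mem_range.mpr (by omega)
    rw [Finset.prod_eq_zero hmem, zero_div]
    rw [hlam, Nat.cast_sub h1]
    push_cast
    ring
  case pos =>
    have hup : ∀ k, k < i → lam i + 1 ≤ lam k := by
      intro k hk
      have h := hA (le_of_lt hk)
      rwa [Function.update_self, Function.update_of_ne (by omega : k ≠ i)] at h
    have hiL : i < l + 1 := by omega
    have c1 : ∀ j, j ≠ lam i + 1 →
        conjPart (l+1) (Function.update lam i (lam i + 1)) j = conjPart (l+1) lam j :=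
      fun j hj => conj_update_ne (l+1) lam i j hj
    have c2 : conjPart (l+1) lam (lam i + 1) = i := conj_at1 (l+1) lam hanti i hiL hup
    have c3 : conjPart (l+1) (Function.update lam i (lam i + 1)) (lam i + 1) = i + 1 :=
      conj_at2 (l+1) lam hanti i hiL hup
    -- tail rows unchanged
    have hT : ∀ k ∈ Finset.Icc (i+1) l,
        rowP (l+1) (Function.update lam i (lam i + 1)) k = rowP (l+1) lam k := by
      intro k hk
      have hki := (Finset.mem_Icc.mp hk).1
      have hl'k : Function.update lam i (lam i + 1) k = lam k :=
        Function.update_of_ne (by omega) _ lam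
      unfold rowP
      rw [hl'k]
      apply Finset.prod_congr rfl
      intro j hj
      have hj' := Finset.mem_Icc.mp hj
      have hk2 : lam k ≤ lam i := hanti (by omega : i ≤ k)
      rw [c1 j (by omega)]
    -- rows above i
    have hK : ∀ k ∈ Finset.range i,
        rowP (l+1) (Function.update lam i (lam i + 1)) k * ((lam i:ℚ) - (i:ℚ) - ((lam k:ℚ) - (k:ℚ)) + 1)
          = rowP (l+1) lam k * ((lam i:ℚ) - (i:ℚ) - ((lam k:ℚ) - (k:ℚ))) := by
      intro k hk
      have hki := Finset.mem_range.mp hk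
      have hl'k : Function.update lam i (lam i + 1) k = lam k :=
        Function.update_of_ne (by omega) _ lam
      have hjmem : lam i + 1 ∈ Finset.Icc 1 (lam k) := Finset.mem_Icc.mpr ⟨by omega, hup k hki⟩
      unfold rowP
      rw [hl'k]
      rw [← Finset.mul_prod_erase _
          (fun j => ((lam k:ℚ) + (conjPart (l+1) (Function.update lam i (lam i + 1)) j : ℚ) - (k:ℚ) - (j:ℚ))) hjmem,
        ← Finset.mul_prod_erase _
          (fun j => ((lam k:ℚ) + (conjPart (l+1) lam j : ℚ) - (k:ℚ) - (j:ℚ))) hjmem]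
      have hE : ∏ j ∈ (Finset.Icc 1 (lam k)).erase (lam i + 1),
          ((lam k:ℚ) + (conjPart (l+1) (Function.update lam i (lam i + 1)) j : ℚ) - (k:ℚ) - (j:ℚ))
          = ∏ j ∈ (Finset.Icc 1 (lam k)).erase (lam i + 1),
          ((lam k:ℚ) + (conjPart (l+1) lam j : ℚ) - (k:ℚ) - (j:ℚ)) := by
        apply Finset.prod_congr rfl
        intro j hj
        rw [c1 j (Finset.ne_of_mem_erase hj)]
      rw [hE, c2, c3]
      push_cast
      ring
    -- row i of lam', hook+1 form
    have hRIB : rowP (l+1) (Function.update lam i (lam i + 1)) i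
        = ∏ j ∈ Finset.Icc 1 (lam i),
            ((lam i : ℚ) - (j:ℚ) + (((Finset.Icc i l).filter (fun k => j ≤ lam k)).card : ℚ) + 1) := by
      unfold rowP
      rw [show Function.update lam i (lam i + 1) i = lam i + 1 from Function.update_self _ _ _,
        Finset.prod_Icc_succ_top (by omega : 1 ≤ lam i + 1), c3]
      have htop : ((lam i + 1 : ℕ):ℚ) + ((i+1 : ℕ):ℚ) - (i:ℚ) - ((lam i + 1 : ℕ):ℚ) = 1 := by
        push_cast; ring
      rw [htop, mul_one]
      apply Finset.prod_congr rfl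
      intro j hj
      have hj' := Finset.mem_Icc.mp hj
      rw [c1 j (by omega), conj_split l lam hanti i hi j hj'.2]
      push_cast
      ring
    -- row i of lam, hook form
    have hRI2 : rowP (l+1) lam i
        = ∏ j ∈ Finset.Icc 1 (lam i),
            ((lam i : ℚ) - (j:ℚ) + (((Finset.Icc i l).filter (fun k => j ≤ lam k)).card : ℚ)) := by
      unfold rowP
      apply Finset.prod_congr rfl
      intro j hj
      have hj' := Finset.mem_Icc.mp hj
      rw [conj_split l lam hanti i hi j hj'.2]
      push_cast
      ring
    have Mi := Mlem lam hanti i l hi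
    -- split products
    have hHsplit : hookProd (l+1) lam
        = (∏ k ∈ Finset.range i, rowP (l+1) lam k)
          * (∏ j ∈ Finset.Icc 1 (lam i),
            ((lam i : ℚ) - (j:ℚ) + (((Finset.Icc i l).filter (fun k => j ≤ lam k)).card : ℚ)))
          * ∏ k ∈ Finset.Icc (i+1) l, rowP (l+1) lam k := by
      rw [hookProd_eq, splitR l i hi, hRI2]
    have hH'split : hookProd (l+1) (Function.update lam i (lam i + 1))
        = (∏ k ∈ Finset.range i, rowP (l+1) (Function.update lam i (lam i + 1)) k)
          * (∏ j ∈ Finset.Icc 1 (lam i),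
            ((lam i : ℚ) - (j:ℚ) + (((Finset.Icc i l).filter (fun k => j ≤ lam k)).card : ℚ) + 1))
          * ∏ k ∈ Finset.Icc (i+1) l, rowP (l+1) lam k := by
      rw [hookProd_eq, splitR l i hi, hRIB, Finset.prod_congr rfl hT]
    have erows : (∏ k ∈ Finset.range i, rowP (l+1) (Function.update lam i (lam i + 1)) k)
          * (∏ k ∈ Finset.range i, ((lam i:ℚ) - (i:ℚ) - ((lam k:ℚ) - (k:ℚ)) + 1))
        = (∏ k ∈ Finset.range i, rowP (l+1) lam k)
          * (∏ k ∈ Finset.range i, ((lam i:ℚ) - (i:ℚ) - ((lam k:ℚ) - (k:ℚ)))) := by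
      rw [← Finset.prod_mul_distrib, ← Finset.prod_mul_distrib]
      exact Finset.prod_congr rfl hK
    have eP : (∏ j ∈ Finset.range l, ((lam i:ℚ) - (i:ℚ) - ((lam j:ℚ) - (j:ℚ)) + 1))
          * ((lam i:ℚ) + (l:ℚ) - (i:ℚ) + 1)
        = (∏ k ∈ Finset.range i, ((lam i:ℚ) - (i:ℚ) - ((lam k:ℚ) - (k:ℚ)) + 1))
          * (∏ k ∈ Finset.Icc (i+1) l, ((lam i:ℚ) - (i:ℚ) - ((lam k:ℚ) - (k:ℚ)) + 1)) := by
      have h1 := splitR l i hi (fun k => ((lam i:ℚ) - (i:ℚ) - ((lam k:ℚ) - (k:ℚ)) + 1))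
      rw [Finset.prod_range_succ] at h1
      have hfl : ((lam i:ℚ) - (i:ℚ) - ((lam l:ℚ) - (l:ℚ)) + 1) = ((lam i:ℚ) + (l:ℚ) - (i:ℚ) + 1) := by
        rw [hsupp l le_rfl]; push_cast; ring
      have hfi : ((lam i:ℚ) - (i:ℚ) - ((lam i:ℚ) - (i:ℚ)) + 1) = 1 := by ring
      rw [hfl, hfi, mul_one] at h1
      exact h1
    have eD : (∏ j ∈ (Finset.range (l+1)).erase i, ((lam i:ℚ) - (i:ℚ) - ((lam j:ℚ) - (j:ℚ))))
        = (∏ k ∈ Finset.range i, ((lam i:ℚ) - (i:ℚ) - ((lam k:ℚ) - (k:ℚ))))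
          * (∏ k ∈ Finset.Icc (i+1) l, ((lam i:ℚ) - (i:ℚ) - ((lam k:ℚ) - (k:ℚ)))) := by
      have hsp : (Finset.range (l+1)).erase i = Finset.range i ∪ Finset.Icc (i+1) l := by
        ext x
        simp only [Finset.mem_erase, Finset.mem_range, Finset.mem_union, Finset.mem_Icc]
        omega
      rw [hsp, Finset.prod_union (Finset.disjoint_left.mpr (fun x hx hx' => by
        simp only [Finset.mem_range] at hx
        simp only [Finset.mem_Icc] at hx'
        omega))]
    -- positivity and nonvanishing
    have hY0 : 0 < ∏ k ∈ Finset.Icc (i+1) l, ((lam i:ℚ) - (i:ℚ) - ((lam k:ℚ) - (k:ℚ))) := by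
      apply Finset.prod_pos
      intro k hk
      have hk' := Finset.mem_Icc.mp hk
      have h1 : (lam k : ℚ) ≤ (lam i : ℚ) := by exact_mod_cast hanti (by omega : i ≤ k)
      have h2 : (i:ℚ) + 1 ≤ (k:ℚ) := by exact_mod_cast hk'.1
      linarith
    have hPk0 : ∀ k ∈ Finset.range i, ((lam i:ℚ) - (i:ℚ) - ((lam k:ℚ) - (k:ℚ))) < 0 := by
      intro k hk
      have hk' := Finset.mem_range.mp hk
      have h1 : (lam i : ℚ) + 1 ≤ (lam k : ℚ) := by exact_mod_cast hup k hk'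
      have h2 : (k:ℚ) + 1 ≤ (i:ℚ) := by exact_mod_cast hk'
      linarith
    have hPk10 : (∏ k ∈ Finset.range i, ((lam i:ℚ) - (i:ℚ) - ((lam k:ℚ) - (k:ℚ)) + 1)) ≠ 0 := by
      apply Finset.prod_ne_zero_iff.mpr
      intro k hk
      have hk' := Finset.mem_range.mp hk
      have h1 : (lam i : ℚ) + 1 ≤ (lam k : ℚ) := by exact_mod_cast hup k hk'
      have h2 : (k:ℚ) + 1 ≤ (i:ℚ) := by exact_mod_cast hk'
      intro hzero
      nlinarith [hzero]
    have hc0 : ((lam i:ℚ) + (l:ℚ) - (i:ℚ) + 1) ≠ 0 := by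
      have h1 : (i:ℚ) ≤ (l:ℚ) := by exact_mod_cast hi
      have h2 : (0:ℚ) ≤ (lam i:ℚ) := by positivity
      intro hzero; linarith
    have hD0 : (∏ j ∈ (Finset.range (l+1)).erase i, ((lam i:ℚ) - (i:ℚ) - ((lam j:ℚ) - (j:ℚ)))) ≠ 0 := by
      rw [eD]
      exact mul_ne_zero (Finset.prod_ne_zero_iff.mpr (fun k hk => ne_of_lt (hPk0 k hk)))
        (ne_of_gt hY0)
    have hH'0 : hookProd (l+1) (Function.update lam i (lam i + 1)) ≠ 0 :=
      ne_of_gt (hookProd_pos _ _ hA)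
    rw [transProb, if_pos hA, div_eq_div_iff hH'0 hD0, hHsplit, hH'split, eD]
    apply mul_right_cancel₀ (mul_ne_zero hc0 hPk10)
    linear_combination
      ((∏ k ∈ Finset.Icc (i+1) l, rowP (l+1) lam k)
        * (∏ k ∈ Finset.range i, ((lam i:ℚ) - (i:ℚ) - ((lam k:ℚ) - (k:ℚ))))
        * (∏ k ∈ Finset.range i, ((lam i:ℚ) - (i:ℚ) - ((lam k:ℚ) - (k:ℚ)) + 1))
        * (∏ k ∈ Finset.range i, rowP (l+1) lam k)) * Mi
      - ((∏ k ∈ Finset.Icc (i+1) l, rowP (l+1) lam k)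
        * (∏ j ∈ Finset.Icc 1 (lam i),
            ((lam i : ℚ) - (j:ℚ) + (((Finset.Icc i l).filter (fun k => j ≤ lam k)).card : ℚ) + 1))
        * (∏ k ∈ Finset.range i, rowP (l+1) (Function.update lam i (lam i + 1)) k)
        * (∏ k ∈ Finset.range i, ((lam i:ℚ) - (i:ℚ) - ((lam k:ℚ) - (k:ℚ)) + 1))) * eP
      - ((∏ k ∈ Finset.Icc (i+1) l, rowP (l+1) lam k)
        * (∏ j ∈ Finset.Icc 1 (lam i),
            ((lam i : ℚ) - (j:ℚ) + (((Finset.Icc i l).filter (fun k => j ≤ lam k)).card : ℚ) + 1))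
        * (∏ k ∈ Finset.Icc (i+1) l, ((lam i:ℚ) - (i:ℚ) - ((lam k:ℚ) - (k:ℚ)) + 1))
        * (∏ k ∈ Finset.range i, ((lam i:ℚ) - (i:ℚ) - ((lam k:ℚ) - (k:ℚ)) + 1))) * erows


lemma tele {R : Type*} [CommRing R] (w : R) (l : ℕ) :
    w * ∏ i ∈ Finset.range l, (w + (i:R) + 1) = (w + (l:R)) * ∏ i ∈ Finset.range l, (w + (i:R)) := by
  induction l with
  | zero => simp
  | succ n ih =>
      rw [Finset.prod_range_succ, Finset.prod_range_succ]
      push_cast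
      linear_combination (w + (n:R) + 1) * ih

lemma shiftAB (u v : ℚ) (s : ℕ) (h : v = u + 1) :
    (∏ j ∈ Finset.Icc 1 s, (u + (j:ℚ))) * (v + (s:ℚ)) = (∏ j ∈ Finset.Icc 1 s, (v + (j:ℚ))) * v := by
  subst h
  induction s with
  | zero => simp
  | succ n ih =>
      rw [Finset.prod_Icc_succ_top (Nat.le_add_left 1 n), Finset.prod_Icc_succ_top (Nat.le_add_left 1 n)]
      push_cast
      push_cast at ih
      linear_combination (u + (n:ℚ) + 2) * ih

lemma rowid (z : ℚ) (i s : ℕ) :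
    (∏ j ∈ Finset.Icc 1 s, ((j:ℚ) - ((i:ℚ)+1) - z))^2 * ((z - ((s:ℚ) - (i:ℚ))) * (z + (i:ℚ) + 1))
    = ((∏ j ∈ Finset.Icc 1 s, ((j:ℚ) - ((i:ℚ)+1) - 1 - z)) * ∏ j ∈ Finset.Icc 1 s, ((j:ℚ) - ((i:ℚ)+1) + 1 - z))
      * ((z - ((s:ℚ) - (i:ℚ)) + 1) * (z + (i:ℚ))) := by
  have cN : ∏ j ∈ Finset.Icc 1 s, ((j:ℚ) - ((i:ℚ)+1) - z)
      = ∏ j ∈ Finset.Icc 1 s, ((-z - (i:ℚ) - 1) + (j:ℚ)) :=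
    Finset.prod_congr rfl (fun j _ => by ring)
  have cD1 : ∏ j ∈ Finset.Icc 1 s, ((j:ℚ) - ((i:ℚ)+1) - 1 - z)
      = ∏ j ∈ Finset.Icc 1 s, ((-z - (i:ℚ) - 2) + (j:ℚ)) :=
    Finset.prod_congr rfl (fun j _ => by ring)
  have cD2 : ∏ j ∈ Finset.Icc 1 s, ((j:ℚ) - ((i:ℚ)+1) + 1 - z)
      = ∏ j ∈ Finset.Icc 1 s, ((-z - (i:ℚ)) + (j:ℚ)) :=
    Finset.prod_congr rfl (fun j _ => by ring)
  rw [cN, cD1, cD2]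
  have n1 := shiftAB (-z - (i:ℚ) - 2) (-z - (i:ℚ) - 1) s (by ring)
  have n2 := shiftAB (-z - (i:ℚ) - 1) (-z - (i:ℚ)) s (by ring)
  linear_combination
    (-((∏ j ∈ Finset.Icc 1 s, ((-z - (i:ℚ) - 1) + (j:ℚ))) * (z + (i:ℚ) + 1))) * n2
    + ((∏ j ∈ Finset.Icc 1 s, ((-z - (i:ℚ)) + (j:ℚ))) * (z + (i:ℚ))) * n1

lemma keyw (l : ℕ) (lam : ℕ → ℕ) (h0 : lam l = 0) (w : ℚ) :
    ((∏ i ∈ Finset.range l, ∏ j ∈ Finset.Icc 1 (lam i), ((j:ℚ) - ((i:ℚ)+1) - w))^2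
      * (∏ k ∈ Finset.range (l+1), (w - ((lam k:ℚ) - (k:ℚ)))))
      * (∏ i ∈ Finset.range l, (w + (i:ℚ)))
    = (w * ((∏ i ∈ Finset.range l, ∏ j ∈ Finset.Icc 1 (lam i), ((j:ℚ) - ((i:ℚ)+1) - 1 - w))
          * (∏ i ∈ Finset.range l, ∏ j ∈ Finset.Icc 1 (lam i), ((j:ℚ) - ((i:ℚ)+1) + 1 - w)))
        * (∏ j ∈ Finset.range l, (w - ((lam j:ℚ) - (j:ℚ) - 1))))
      * (∏ i ∈ Finset.range l, (w + (i:ℚ))) := by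
  have hrow : ∀ i ∈ Finset.range l,
      (∏ j ∈ Finset.Icc 1 (lam i), ((j:ℚ) - ((i:ℚ)+1) - w))^2
        * ((w - ((lam i:ℚ) - (i:ℚ))) * (w + (i:ℚ) + 1))
      = ((∏ j ∈ Finset.Icc 1 (lam i), ((j:ℚ) - ((i:ℚ)+1) - 1 - w))
          * ∏ j ∈ Finset.Icc 1 (lam i), ((j:ℚ) - ((i:ℚ)+1) + 1 - w))
        * ((w - ((lam i:ℚ) - (i:ℚ)) + 1) * (w + (i:ℚ))) := fun i _ => rowid w i (lam i)
  have hbig := Finset.prod_congr rfl hrow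
  simp only [Finset.prod_mul_distrib, Finset.prod_pow] at hbig
  have htele := tele w l
  have hQ : (∏ k ∈ Finset.range (l+1), (w - ((lam k:ℚ) - (k:ℚ))))
      = (∏ k ∈ Finset.range l, (w - ((lam k:ℚ) - (k:ℚ)))) * (w + (l:ℚ)) := by
    rw [Finset.prod_range_succ, h0]
    norm_num
  have hP : (∏ j ∈ Finset.range l, (w - ((lam j:ℚ) - (j:ℚ) - 1)))
      = ∏ j ∈ Finset.range l, (w - ((lam j:ℚ) - (j:ℚ)) + 1) :=
    Finset.prod_congr rfl (fun j _ => by ring)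
  rw [hQ, hP]
  linear_combination w * hbig
    - ((∏ i ∈ Finset.range l, ∏ j ∈ Finset.Icc 1 (lam i), ((j:ℚ) - ((i:ℚ)+1) - w))^2
        * (∏ k ∈ Finset.range l, (w - ((lam k:ℚ) - (k:ℚ))))) * htele

lemma contentKey (l : ℕ) (lam : ℕ → ℕ) (h0 : lam l = 0) (z : ℚ) :
    contentPoly l lam (-z)^2 * (∏ k ∈ Finset.range (l+1), (z - ((lam k:ℚ) - (k:ℚ))))
    = z * (contentPoly l lam (-z-1) * contentPoly l lam (-z+1))
        * (∏ j ∈ Finset.range l, (z - ((lam j:ℚ) - (j:ℚ)) + 1)) := by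
  have hEp : (∏ i ∈ Finset.range l, (Polynomial.X + Polynomial.C (i:ℚ))) ≠ 0 :=
    Finset.prod_ne_zero_iff.mpr (fun i _ => Polynomial.X_add_C_ne_zero (i:ℚ))
  have hFG : (∏ i ∈ Finset.range l, ∏ j ∈ Finset.Icc 1 (lam i),
        (Polynomial.C ((j:ℚ) - ((i:ℚ)+1)) - Polynomial.X))^2
        * (∏ k ∈ Finset.range (l+1), (Polynomial.X - Polynomial.C ((lam k:ℚ) - (k:ℚ))))
      = Polynomial.X * ((∏ i ∈ Finset.range l, ∏ j ∈ Finset.Icc 1 (lam i),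
          (Polynomial.C ((j:ℚ) - ((i:ℚ)+1) - 1) - Polynomial.X))
        * (∏ i ∈ Finset.range l, ∏ j ∈ Finset.Icc 1 (lam i),
          (Polynomial.C ((j:ℚ) - ((i:ℚ)+1) + 1) - Polynomial.X)))
        * (∏ j ∈ Finset.range l, (Polynomial.X - Polynomial.C ((lam j:ℚ) - (j:ℚ) - 1))) := by
    apply mul_right_cancel₀ hEp
    apply Polynomial.funext
    intro w
    simp only [Polynomial.eval_mul, Polynomial.eval_pow, Polynomial.eval_prod,
      Polynomial.eval_sub, Polynomial.eval_add, Polynomial.eval_X, Polynomial.eval_C]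
    exact keyw l lam h0 w
  have h2 := congrArg (Polynomial.eval z) hFG
  simp only [Polynomial.eval_mul, Polynomial.eval_pow, Polynomial.eval_prod,
    Polynomial.eval_sub, Polynomial.eval_add, Polynomial.eval_X, Polynomial.eval_C] at h2
  have hc1 : (∏ i ∈ Finset.range l, ∏ j ∈ Finset.Icc 1 (lam i), ((j:ℚ) - ((i:ℚ)+1) - z))
      = contentPoly l lam (-z) := by
    unfold contentPoly
    exact Finset.prod_congr rfl (fun i _ => Finset.prod_congr rfl (fun j _ => by ring))
  have hc2 : (∏ i ∈ Finset.range l, ∏ j ∈ Finset.Icc 1 (lam i), ((j:ℚ) - ((i:ℚ)+1) - 1 - z))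
      = contentPoly l lam (-z-1) := by
    unfold contentPoly
    exact Finset.prod_congr rfl (fun i _ => Finset.prod_congr rfl (fun j _ => by ring))
  have hc3 : (∏ i ∈ Finset.range l, ∏ j ∈ Finset.Icc 1 (lam i), ((j:ℚ) - ((i:ℚ)+1) + 1 - z))
      = contentPoly l lam (-z+1) := by
    unfold contentPoly
    exact Finset.prod_congr rfl (fun i _ => Finset.prod_congr rfl (fun j _ => by ring))
  have hc4 : (∏ j ∈ Finset.range l, (z - ((lam j:ℚ) - (j:ℚ) - 1)))
      = ∏ j ∈ Finset.range l, (z - ((lam j:ℚ) - (j:ℚ)) + 1) :=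
    Finset.prod_congr rfl (fun j _ => by ring)
  rw [hc1, hc2, hc3, hc4] at h2
  exact h2

section MainProof
open Polynomial

theorem transition_measure_generating_series (l : ℕ) (lam : ℕ → ℕ)
    (hanti : Antitone lam) (hsupp : ∀ i, l ≤ i → lam i = 0)
    (z : ℚ) (hz0 : z ≠ 0)
    (hpole : ∀ i ∈ Finset.range (l + 1), z ≠ (lam i : ℚ) - (i : ℚ))
    (hden1 : contentPoly l lam (-z - 1) ≠ 0)
    (hden2 : contentPoly l lam (-z + 1) ≠ 0) :
    ∑ i ∈ Finset.range (l + 1),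
        transProb (l + 1) lam i / (z - ((lam i : ℚ) - (i : ℚ))) =
      z⁻¹ * contentPoly l lam (-z) ^ 2 /
        (contentPoly l lam (-z - 1) * contentPoly l lam (-z + 1)) := by
  have hvanti : StrictAnti (fun k : ℕ => (lam k : ℚ) - (k : ℚ)) := by
    intro a b hab
    have h1 : lam b ≤ lam a := hanti hab.le
    have h1' : (lam b : ℚ) ≤ (lam a : ℚ) := by exact_mod_cast h1
    have h2 : (a : ℚ) + 1 ≤ (b : ℚ) := by exact_mod_cast hab
    simp only
    linarith
  have hinj : Set.InjOn (fun k : ℕ => (lam k : ℚ) - (k : ℚ)) ↑(Finset.range (l+1)) :=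
    hvanti.injective.injOn
  set f : Polynomial ℚ :=
    ∏ j ∈ Finset.range l, (Polynomial.X - Polynomial.C ((lam j:ℚ) - (j:ℚ) - 1)) with hfdef
  have hfeval : ∀ w : ℚ, Polynomial.eval w f
      = ∏ j ∈ Finset.range l, (w - ((lam j:ℚ) - (j:ℚ)) + 1) := by
    intro w
    rw [hfdef]
    simp only [Polynomial.eval_prod, Polynomial.eval_sub, Polynomial.eval_X, Polynomial.eval_C]
    exact Finset.prod_congr rfl (fun j _ => by ring)
  have hf0 : f ≠ 0 :=
    Finset.prod_ne_zero_iff.mpr (fun j _ => Polynomial.X_sub_C_ne_zero _)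
  have hnd : f.natDegree ≤ l := by
    refine le_trans (Polynomial.natDegree_prod_le _ _) ?_
    have h1 : ∀ j ∈ Finset.range l,
        (Polynomial.X - Polynomial.C ((lam j:ℚ) - (j:ℚ) - 1)).natDegree = 1 :=
      fun j _ => Polynomial.natDegree_X_sub_C _
    rw [Finset.sum_congr rfl h1, Finset.sum_const, Finset.card_range, smul_eq_mul, mul_one]
  have hdeg : f.degree < ((Finset.range (l+1)).card : ℕ) := by
    rw [Finset.card_range]
    refine lt_of_le_of_lt Polynomial.degree_le_natDegree ?_
    exact_mod_cast Nat.lt_succ_of_le hnd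
  have hLag := Lagrange.eq_interpolate hinj hdeg
  have heval := congrArg (Polynomial.eval z) hLag
  rw [Lagrange.interpolate_apply] at heval
  simp only [Polynomial.eval_finset_sum, Polynomial.eval_mul, Polynomial.eval_C,
    Lagrange.basis, Lagrange.basisDivisor, Polynomial.eval_prod, Polynomial.eval_sub,
    Polynomial.eval_X] at heval
  -- nonvanishing of denominators
  have hQ0 : (∏ k ∈ Finset.range (l+1), (z - ((lam k:ℚ) - (k:ℚ)))) ≠ 0 :=
    Finset.prod_ne_zero_iff.mpr (fun k hk => sub_ne_zero_of_ne (hpole k hk))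
  -- step 1 : Lagrange partial fractions
  have hstep1 : (∑ i ∈ Finset.range (l + 1),
        transProb (l + 1) lam i / (z - ((lam i : ℚ) - (i : ℚ))))
      * (∏ k ∈ Finset.range (l+1), (z - ((lam k:ℚ) - (k:ℚ))))
      = ∏ j ∈ Finset.range l, (z - ((lam j:ℚ) - (j:ℚ)) + 1) := by
    rw [Finset.sum_mul]
    have hterm : ∀ i ∈ Finset.range (l+1),
        transProb (l + 1) lam i / (z - ((lam i : ℚ) - (i : ℚ)))
          * (∏ k ∈ Finset.range (l+1), (z - ((lam k:ℚ) - (k:ℚ))))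
        = Polynomial.eval ((lam i:ℚ) - (i:ℚ)) f
            * ∏ j ∈ (Finset.range (l+1)).erase i,
              ((((lam i:ℚ) - (i:ℚ)) - ((lam j:ℚ) - (j:ℚ)))⁻¹ * (z - ((lam j:ℚ) - (j:ℚ)))) := by
      intro i hi
      have hil : i ≤ l := by have := Finset.mem_range.mp hi; omega
      have hzi : z - ((lam i:ℚ) - (i:ℚ)) ≠ 0 := sub_ne_zero_of_ne (hpole i hi)
      have hD0 : (∏ j ∈ (Finset.range (l+1)).erase i,
          (((lam i:ℚ) - (i:ℚ)) - ((lam j:ℚ) - (j:ℚ)))) ≠ 0 := by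
        apply Finset.prod_ne_zero_iff.mpr
        intro j hj
        have hji : j ≠ i := Finset.ne_of_mem_erase hj
        exact sub_ne_zero_of_ne (fun hc => hji (hvanti.injective hc.symm))
      have hQsplit : (∏ k ∈ Finset.range (l+1), (z - ((lam k:ℚ) - (k:ℚ))))
          = (z - ((lam i:ℚ) - (i:ℚ)))
            * ∏ j ∈ (Finset.range (l+1)).erase i, (z - ((lam j:ℚ) - (j:ℚ))) :=
        (Finset.mul_prod_erase _ _ hi).symm
      rw [transProb_eq l lam hanti hsupp i hil, hfeval, hQsplit, Finset.prod_mul_distrib,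
        Finset.prod_inv_distrib]
      simp only [div_eq_mul_inv]
      have hzz : (z - ((lam i:ℚ) - (i:ℚ)))⁻¹ * (z - ((lam i:ℚ) - (i:ℚ))) = 1 :=
        inv_mul_cancel₀ hzi
      linear_combination ((∏ j ∈ Finset.range l, ((lam i:ℚ) - (i:ℚ) - ((lam j:ℚ) - (j:ℚ)) + 1))
        * (∏ j ∈ (Finset.range (l+1)).erase i, (((lam i:ℚ) - (i:ℚ)) - ((lam j:ℚ) - (j:ℚ))))⁻¹
        * (∏ j ∈ (Finset.range (l+1)).erase i, (z - ((lam j:ℚ) - (j:ℚ))))) * hzz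
    rw [Finset.sum_congr rfl hterm, ← heval, hfeval]
  -- step 2 : content polynomial identity
  have hstep2 := contentKey l lam (hsupp l le_rfl) z
  have hS : (∑ i ∈ Finset.range (l + 1),
        transProb (l + 1) lam i / (z - ((lam i : ℚ) - (i : ℚ))))
      = (∏ j ∈ Finset.range l, (z - ((lam j:ℚ) - (j:ℚ)) + 1))
        / (∏ k ∈ Finset.range (l+1), (z - ((lam k:ℚ) - (k:ℚ)))) := by
    rw [eq_div_iff hQ0]
    exact hstep1
  rw [hS, div_eq_div_iff hQ0 (mul_ne_zero hden1 hden2)]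
  have hz1 : z⁻¹ * z = 1 := inv_mul_cancel₀ hz0
  linear_combination (-(z⁻¹)) * hstep2
    - ((contentPoly l lam (-z - 1) * contentPoly l lam (-z + 1))
        * (∏ j ∈ Finset.range l, (z - ((lam j:ℚ) - (j:ℚ)) + 1))) * hz1

end MainProof
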